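/- Let 𝔊₄⁰⁰ be the 7-dimensional real Lie algebra with basis (X₁,X₂,X₃,X₄,X₅,X,Y) and nonzero brackets [X₁,X₂]=X₄, [X₁,X₃]=X₅, [X,X₁]=X₁, [X,X₄]=X₄, [X,X₅]=X₅, [Y,X₂]=X₂, [Y,X₄]=X₄. Let F ∈ (𝔊₄⁰⁰)* have coordinates (α₁,α₂,α₃,α₄,α₅,α,β) with α₄α₅ ≠ 0. Then Ω_F(𝔊₄⁰⁰) = { (x₁*,x₂*,x₃*,x₄*,x₅*,x*,y*) ∈ (𝔊₄⁰⁰)* : x₃* − x₂*x₅*/x₄* = (α₃α₄ − α₂α₅)/α₄, α₄x₄* > 0, α₅x₅* > 0 } (here x₁*, x₂*, x*, y* range over all of ℝ). -/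

import Mathlib

set_option maxHeartbeats 1000000


noncomputable section

/-- Half of the structure constants of the Lie algebra 𝔊₄⁰⁰ (indices `0,…,4` are
`X₁,…,X₅`, index `5` is `X`, index `6` is `Y`). -/
def g4half (i j : Fin 7) : Fin 7 → ℝ :=
  if i = 0 ∧ j = 1 then Pi.single 3 1      -- [X₁,X₂] = X₄
  else if i = 0 ∧ j = 2 then Pi.single 4 1 -- [X₁,X₃] = X₅
  else if i = 5 ∧ j = 0 then Pi.single 0 1 -- [X,X₁] = X₁
  else if i = 5 ∧ j = 3 then Pi.single 3 1 -- [X,X₄] = X₄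
  else if i = 5 ∧ j = 4 then Pi.single 4 1 -- [X,X₅] = X₅
  else if i = 6 ∧ j = 1 then Pi.single 1 1 -- [Y,X₂] = X₂
  else if i = 6 ∧ j = 3 then Pi.single 3 1 -- [Y,X₄] = X₄
  else 0

/-- The bracket `[Xᵢ, Xⱼ]` (in coordinates) of basis vectors of 𝔊₄⁰⁰. -/
def g4br (i j : Fin 7) : Fin 7 → ℝ := g4half i j - g4half j i

/-- The matrix (in the given basis) of the adjoint endomorphism `ad_U : T ↦ [U,T]`
of 𝔊₄⁰⁰, where `u` is the coordinate vector of `U`. -/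
def adG4 (u : Fin 7 → ℝ) : Matrix (Fin 7) (Fin 7) ℝ :=
  Matrix.of fun k j => ∑ i, u i * g4br i j k

/-- `Ω_F(𝔊₄⁰⁰) = {F_U : U ∈ 𝔊₄⁰⁰}` where `⟨F_U,T⟩ = ⟨F, exp(ad_U)(T)⟩`; in coordinates
(dual basis), `F_U = α ᵥ* exp(ad_U)` where `α` is the coordinate vector of `F`. -/
def OmegaG4 (α : Fin 7 → ℝ) : Set (Fin 7 → ℝ) :=
  {g | ∃ u : Fin 7 → ℝ, g = Matrix.vecMul α (NormedSpace.exp (adG4 u))}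

open Real


def ph (c t : ℝ) : ℝ := if c = 0 then t else (Real.exp (t*c) - 1)/c

def ch (c d t : ℝ) : ℝ :=
  if c = d then (if c = 0 then t^2/2 else (t*c*Real.exp (t*c) - Real.exp (t*c) + 1)/c^2)
  else (ph c t - ph d t)/(c-d)

lemma hd_exp (c t : ℝ) : HasDerivAt (fun s : ℝ => Real.exp (s*c)) (c * Real.exp (t*c)) t := by
  simpa [mul_comm] using ((hasDerivAt_id t).mul_const c).exp

lemma hd_ph (c t : ℝ) : HasDerivAt (fun s => ph c s) (Real.exp (t*c)) t := by
  rcases eq_or_ne c 0 with h | h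
  · simpa [ph, h] using hasDerivAt_id' t
  · simp only [ph, if_neg h]
    simpa [h] using ((hd_exp c t).sub_const 1).div_const c

lemma exp_eq_ph (c t : ℝ) : Real.exp (t*c) = 1 + c * ph c t := by
  rcases eq_or_ne c 0 with h | h
  · simp [ph, h]
  · simp only [ph, if_neg h]
    rw [mul_div_cancel₀ _ h]
    ring

lemma ph_zero (c : ℝ) : ph c 0 = 0 := by simp [ph]

lemma ph_one_pos (c : ℝ) : 0 < ph c 1 := by
  rcases eq_or_ne c 0 with h | h
  · simp [ph, h]
  · simp only [ph, if_neg h, one_mul]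
    rcases lt_or_gt_of_ne h with hc | hc
    · apply div_pos_of_neg_of_neg <;> nlinarith [Real.exp_lt_one_iff.2 hc]
    · apply div_pos <;> nlinarith [Real.add_one_lt_exp (ne_of_gt hc)]

lemma ch_zero (c d : ℝ) : ch c d 0 = 0 := by
  rcases eq_or_ne c d with h | h <;> simp [ch, h, ph_zero]

lemma hd_ch (c d t : ℝ) : HasDerivAt (fun s => ch c d s) (ph d t + c * ch c d t) t := by
  rcases eq_or_ne c d with h | h
  · subst h
    rcases eq_or_ne c 0 with h0 | h0
    · simp only [ch, if_pos rfl, if_pos h0, h0]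
      have : HasDerivAt (fun s : ℝ => s^2/2) t t := by
        simpa using ((hasDerivAt_pow 2 t).div_const 2)
      refine this.congr_deriv ?_
      simp [ph, h0]
    · simp only [ch, if_pos rfl, if_neg h0]
      have h1 : HasDerivAt (fun s : ℝ => s*c*Real.exp (s*c) - Real.exp (s*c) + 1)
          ((c * Real.exp (t*c) + t*c*(c * Real.exp (t*c))) - c * Real.exp (t*c)) t := by
        have := ((((hasDerivAt_id t).mul_const c).mul (hd_exp c t)).sub (hd_exp c t)).add_const (1:ℝ)
        refine this.congr_deriv ?_
        simp [id]
      have := h1.div_const (c^2)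
      refine this.congr_deriv ?_
      simp only [ph, if_neg h0, eq_self_iff_true, if_true]
      field_simp
      ring
  · simp only [ch, if_neg h]
    have := ((hd_ph c t).sub (hd_ph d t)).div_const (c - d)
    refine this.congr_deriv ?_
    have hcd : c - d ≠ 0 := sub_ne_zero.2 h
    rw [exp_eq_ph c t, exp_eq_ph d t]
    field_simp
    ring

lemma hd_expph (d e t : ℝ) : HasDerivAt (fun s => Real.exp (s*d) * ph e s)
    (Real.exp (t*d) + (d+e) * (Real.exp (t*d) * ph e t)) t := by
  have := (hd_exp d t).mul (hd_ph e t)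
  refine this.congr_deriv ?_
  rw [exp_eq_ph e t]
  ring

lemma hd_texp (c t : ℝ) : HasDerivAt (fun s => s * Real.exp (s*c))
    (Real.exp (t*c) + c * (t * Real.exp (t*c))) t := by
  have := (hasDerivAt_id t).mul (hd_exp c t)
  refine this.congr_deriv ?_
  simp [id]
  ring

lemma cv_0_0 {α : Type*} (x : α) (f : Fin 0 → α) : Matrix.vecCons x f 0 = x := rfl
lemma cv_1_0 {α : Type*} (x : α) (f : Fin 1 → α) : Matrix.vecCons x f 0 = x := rfl
lemma cv_1_1 {α : Type*} (x : α) (f : Fin 1 → α) : Matrix.vecCons x f 1 = f 0 := rfl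
lemma cv_2_0 {α : Type*} (x : α) (f : Fin 2 → α) : Matrix.vecCons x f 0 = x := rfl
lemma cv_2_1 {α : Type*} (x : α) (f : Fin 2 → α) : Matrix.vecCons x f 1 = f 0 := rfl
lemma cv_2_2 {α : Type*} (x : α) (f : Fin 2 → α) : Matrix.vecCons x f 2 = f 1 := rfl
lemma cv_3_0 {α : Type*} (x : α) (f : Fin 3 → α) : Matrix.vecCons x f 0 = x := rfl
lemma cv_3_1 {α : Type*} (x : α) (f : Fin 3 → α) : Matrix.vecCons x f 1 = f 0 := rfl
lemma cv_3_2 {α : Type*} (x : α) (f : Fin 3 → α) : Matrix.vecCons x f 2 = f 1 := rfl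
lemma cv_3_3 {α : Type*} (x : α) (f : Fin 3 → α) : Matrix.vecCons x f 3 = f 2 := rfl
lemma cv_4_0 {α : Type*} (x : α) (f : Fin 4 → α) : Matrix.vecCons x f 0 = x := rfl
lemma cv_4_1 {α : Type*} (x : α) (f : Fin 4 → α) : Matrix.vecCons x f 1 = f 0 := rfl
lemma cv_4_2 {α : Type*} (x : α) (f : Fin 4 → α) : Matrix.vecCons x f 2 = f 1 := rfl
lemma cv_4_3 {α : Type*} (x : α) (f : Fin 4 → α) : Matrix.vecCons x f 3 = f 2 := rfl
lemma cv_4_4 {α : Type*} (x : α) (f : Fin 4 → α) : Matrix.vecCons x f 4 = f 3 := rfl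
lemma cv_5_0 {α : Type*} (x : α) (f : Fin 5 → α) : Matrix.vecCons x f 0 = x := rfl
lemma cv_5_1 {α : Type*} (x : α) (f : Fin 5 → α) : Matrix.vecCons x f 1 = f 0 := rfl
lemma cv_5_2 {α : Type*} (x : α) (f : Fin 5 → α) : Matrix.vecCons x f 2 = f 1 := rfl
lemma cv_5_3 {α : Type*} (x : α) (f : Fin 5 → α) : Matrix.vecCons x f 3 = f 2 := rfl
lemma cv_5_4 {α : Type*} (x : α) (f : Fin 5 → α) : Matrix.vecCons x f 4 = f 3 := rfl
lemma cv_5_5 {α : Type*} (x : α) (f : Fin 5 → α) : Matrix.vecCons x f 5 = f 4 := rfl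
lemma cv_6_0 {α : Type*} (x : α) (f : Fin 6 → α) : Matrix.vecCons x f 0 = x := rfl
lemma cv_6_1 {α : Type*} (x : α) (f : Fin 6 → α) : Matrix.vecCons x f 1 = f 0 := rfl
lemma cv_6_2 {α : Type*} (x : α) (f : Fin 6 → α) : Matrix.vecCons x f 2 = f 1 := rfl
lemma cv_6_3 {α : Type*} (x : α) (f : Fin 6 → α) : Matrix.vecCons x f 3 = f 2 := rfl
lemma cv_6_4 {α : Type*} (x : α) (f : Fin 6 → α) : Matrix.vecCons x f 4 = f 3 := rfl
lemma cv_6_5 {α : Type*} (x : α) (f : Fin 6 → α) : Matrix.vecCons x f 5 = f 4 := rfl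
lemma cv_6_6 {α : Type*} (x : α) (f : Fin 6 → α) : Matrix.vecCons x f 6 = f 5 := rfl


lemma cv5 {α : Type*} (x0 x1 x2 x3 x4 x5 x6 : α) : ![x0,x1,x2,x3,x4,x5,x6] 5 = x5 := rfl
lemma cv6 {α : Type*} (x0 x1 x2 x3 x4 x5 x6 : α) : ![x0,x1,x2,x3,x4,x5,x6] 6 = x6 := rfl

lemma adG4_eq (u : Fin 7 → ℝ) : adG4 u =
    !![u 5, 0, 0, 0, 0, -(u 0), 0;
       0, u 6, 0, 0, 0, 0, -(u 1);
       0, 0, 0, 0, 0, 0, 0;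
       -(u 1), u 0, 0, u 5 + u 6, 0, -(u 3), -(u 3);
       -(u 2), 0, u 0, 0, u 5, -(u 4), 0;
       0, 0, 0, 0, 0, 0, 0;
       0, 0, 0, 0, 0, 0, 0] := by
  ext k j
  fin_cases k <;> fin_cases j <;>
    (simp only [adG4, Matrix.of_apply, Fin.sum_univ_seven, g4br, g4half, Pi.sub_apply];
     simp (config := { decide := true }) [Pi.single_apply, Matrix.cons_val', Matrix.cons_val_zero,
      Matrix.cons_val_one, Matrix.head_cons, cv5, cv6]) <;> rfl

def adlit (u : Fin 7 → ℝ) : Matrix (Fin 7) (Fin 7) ℝ :=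
  !![u 5, 0, 0, 0, 0, -u 0, 0;
     0, u 6, 0, 0, 0, 0, -u 1;
     0, 0, 0, 0, 0, 0, 0;
     -u 1, u 0, 0, u 5 + u 6, 0, -u 3, -u 3;
     -u 2, 0, u 0, 0, u 5, -u 4, 0;
     0, 0, 0, 0, 0, 0, 0;
     0, 0, 0, 0, 0, 0, 0]

def Mmat (u : Fin 7 → ℝ) (t : ℝ) : Matrix (Fin 7) (Fin 7) ℝ :=
  !![Real.exp (t * u 5), 0, 0, 0, 0, -u 0 * ph (u 5) t, 0;
     0, Real.exp (t * u 6), 0, 0, 0, 0, -u 1 * ph (u 6) t;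
     0, 0, 1, 0, 0, 0, 0;
     -u 1 * (Real.exp (t * u 5) * ph (u 6) t), u 0 * (Real.exp (t * u 6) * ph (u 5) t), 0, Real.exp (t * (u 5 + u 6)), 0, -u 3 * ph (u 5 + u 6) t + u 0 * u 1 * ch (u 5 + u 6) (u 5) t, -u 3 * ph (u 5 + u 6) t - u 0 * u 1 * ch (u 5 + u 6) (u 6) t;
     -u 2 * (t * Real.exp (t * u 5)), 0, u 0 * ph (u 5) t, 0, Real.exp (t * u 5), u 0 * u 2 * ch (u 5) (u 5) t - u 4 * ph (u 5) t, 0;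
     0, 0, 0, 0, 0, 1, 0;
     0, 0, 0, 0, 0, 0, 1]

def Mder (u : Fin 7 → ℝ) (t : ℝ) : Matrix (Fin 7) (Fin 7) ℝ :=
  !![u 5 * Real.exp (t * u 5), 0, 0, 0, 0, -u 0 * Real.exp (t * u 5), 0;
     0, u 6 * Real.exp (t * u 6), 0, 0, 0, 0, -u 1 * Real.exp (t * u 6);
     0, 0, 0, 0, 0, 0, 0;
     -u 1 * (Real.exp (t * u 5) + (u 5 + u 6) * (Real.exp (t * u 5) * ph (u 6) t)), u 0 * (Real.exp (t * u 6) + (u 6 + u 5) * (Real.exp (t * u 6) * ph (u 5) t)), 0, (u 5 + u 6) * Real.exp (t * (u 5 + u 6)), 0, -u 3 * Real.exp (t * (u 5 + u 6)) + u 0 * u 1 * (ph (u 5) t + (u 5 + u 6) * ch (u 5 + u 6) (u 5) t), -u 3 * Real.exp (t * (u 5 + u 6)) - u 0 * u 1 * (ph (u 6) t + (u 5 + u 6) * ch (u 5 + u 6) (u 6) t);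
     -u 2 * (Real.exp (t * u 5) + u 5 * (t * Real.exp (t * u 5))), 0, u 0 * Real.exp (t * u 5), 0, u 5 * Real.exp (t * u 5), u 0 * u 2 * (ph (u 5) t + u 5 * ch (u 5) (u 5) t) - u 4 * Real.exp (t * u 5), 0;
     0, 0, 0, 0, 0, 0, 0;
     0, 0, 0, 0, 0, 0, 0]


lemma Ae_0_0 (u : Fin 7 → ℝ) : adlit u 0 0 = u 5 := rfl

lemma Ae_0_1 (u : Fin 7 → ℝ) : adlit u 0 1 = 0 := rfl

lemma Ae_0_2 (u : Fin 7 → ℝ) : adlit u 0 2 = 0 := rfl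

lemma Ae_0_3 (u : Fin 7 → ℝ) : adlit u 0 3 = 0 := rfl

lemma Ae_0_4 (u : Fin 7 → ℝ) : adlit u 0 4 = 0 := rfl

lemma Ae_0_5 (u : Fin 7 → ℝ) : adlit u 0 5 = -u 0 := rfl

lemma Ae_0_6 (u : Fin 7 → ℝ) : adlit u 0 6 = 0 := rfl

lemma Ae_1_0 (u : Fin 7 → ℝ) : adlit u 1 0 = 0 := rfl

lemma Ae_1_1 (u : Fin 7 → ℝ) : adlit u 1 1 = u 6 := rfl

lemma Ae_1_2 (u : Fin 7 → ℝ) : adlit u 1 2 = 0 := rfl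

lemma Ae_1_3 (u : Fin 7 → ℝ) : adlit u 1 3 = 0 := rfl

lemma Ae_1_4 (u : Fin 7 → ℝ) : adlit u 1 4 = 0 := rfl

lemma Ae_1_5 (u : Fin 7 → ℝ) : adlit u 1 5 = 0 := rfl

lemma Ae_1_6 (u : Fin 7 → ℝ) : adlit u 1 6 = -u 1 := rfl

lemma Ae_2_0 (u : Fin 7 → ℝ) : adlit u 2 0 = 0 := rfl

lemma Ae_2_1 (u : Fin 7 → ℝ) : adlit u 2 1 = 0 := rfl

lemma Ae_2_2 (u : Fin 7 → ℝ) : adlit u 2 2 = 0 := rfl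

lemma Ae_2_3 (u : Fin 7 → ℝ) : adlit u 2 3 = 0 := rfl

lemma Ae_2_4 (u : Fin 7 → ℝ) : adlit u 2 4 = 0 := rfl

lemma Ae_2_5 (u : Fin 7 → ℝ) : adlit u 2 5 = 0 := rfl

lemma Ae_2_6 (u : Fin 7 → ℝ) : adlit u 2 6 = 0 := rfl

lemma Ae_3_0 (u : Fin 7 → ℝ) : adlit u 3 0 = -u 1 := rfl

lemma Ae_3_1 (u : Fin 7 → ℝ) : adlit u 3 1 = u 0 := rfl

lemma Ae_3_2 (u : Fin 7 → ℝ) : adlit u 3 2 = 0 := rfl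

lemma Ae_3_3 (u : Fin 7 → ℝ) : adlit u 3 3 = u 5 + u 6 := rfl

lemma Ae_3_4 (u : Fin 7 → ℝ) : adlit u 3 4 = 0 := rfl

lemma Ae_3_5 (u : Fin 7 → ℝ) : adlit u 3 5 = -u 3 := rfl

lemma Ae_3_6 (u : Fin 7 → ℝ) : adlit u 3 6 = -u 3 := rfl

lemma Ae_4_0 (u : Fin 7 → ℝ) : adlit u 4 0 = -u 2 := rfl

lemma Ae_4_1 (u : Fin 7 → ℝ) : adlit u 4 1 = 0 := rfl

lemma Ae_4_2 (u : Fin 7 → ℝ) : adlit u 4 2 = u 0 := rfl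

lemma Ae_4_3 (u : Fin 7 → ℝ) : adlit u 4 3 = 0 := rfl

lemma Ae_4_4 (u : Fin 7 → ℝ) : adlit u 4 4 = u 5 := rfl

lemma Ae_4_5 (u : Fin 7 → ℝ) : adlit u 4 5 = -u 4 := rfl

lemma Ae_4_6 (u : Fin 7 → ℝ) : adlit u 4 6 = 0 := rfl

lemma Ae_5_0 (u : Fin 7 → ℝ) : adlit u 5 0 = 0 := rfl

lemma Ae_5_1 (u : Fin 7 → ℝ) : adlit u 5 1 = 0 := rfl

lemma Ae_5_2 (u : Fin 7 → ℝ) : adlit u 5 2 = 0 := rfl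

lemma Ae_5_3 (u : Fin 7 → ℝ) : adlit u 5 3 = 0 := rfl

lemma Ae_5_4 (u : Fin 7 → ℝ) : adlit u 5 4 = 0 := rfl

lemma Ae_5_5 (u : Fin 7 → ℝ) : adlit u 5 5 = 0 := rfl

lemma Ae_5_6 (u : Fin 7 → ℝ) : adlit u 5 6 = 0 := rfl

lemma Ae_6_0 (u : Fin 7 → ℝ) : adlit u 6 0 = 0 := rfl

lemma Ae_6_1 (u : Fin 7 → ℝ) : adlit u 6 1 = 0 := rfl

lemma Ae_6_2 (u : Fin 7 → ℝ) : adlit u 6 2 = 0 := rfl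

lemma Ae_6_3 (u : Fin 7 → ℝ) : adlit u 6 3 = 0 := rfl

lemma Ae_6_4 (u : Fin 7 → ℝ) : adlit u 6 4 = 0 := rfl

lemma Ae_6_5 (u : Fin 7 → ℝ) : adlit u 6 5 = 0 := rfl

lemma Ae_6_6 (u : Fin 7 → ℝ) : adlit u 6 6 = 0 := rfl

lemma Me_0_0 (u : Fin 7 → ℝ) (t : ℝ) : Mmat u t 0 0 = Real.exp (t * u 5) := rfl

lemma Me_0_1 (u : Fin 7 → ℝ) (t : ℝ) : Mmat u t 0 1 = 0 := rfl

lemma Me_0_2 (u : Fin 7 → ℝ) (t : ℝ) : Mmat u t 0 2 = 0 := rfl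

lemma Me_0_3 (u : Fin 7 → ℝ) (t : ℝ) : Mmat u t 0 3 = 0 := rfl

lemma Me_0_4 (u : Fin 7 → ℝ) (t : ℝ) : Mmat u t 0 4 = 0 := rfl

lemma Me_0_5 (u : Fin 7 → ℝ) (t : ℝ) : Mmat u t 0 5 = -u 0 * ph (u 5) t := rfl

lemma Me_0_6 (u : Fin 7 → ℝ) (t : ℝ) : Mmat u t 0 6 = 0 := rfl

lemma Me_1_0 (u : Fin 7 → ℝ) (t : ℝ) : Mmat u t 1 0 = 0 := rfl

lemma Me_1_1 (u : Fin 7 → ℝ) (t : ℝ) : Mmat u t 1 1 = Real.exp (t * u 6) := rfl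

lemma Me_1_2 (u : Fin 7 → ℝ) (t : ℝ) : Mmat u t 1 2 = 0 := rfl

lemma Me_1_3 (u : Fin 7 → ℝ) (t : ℝ) : Mmat u t 1 3 = 0 := rfl

lemma Me_1_4 (u : Fin 7 → ℝ) (t : ℝ) : Mmat u t 1 4 = 0 := rfl

lemma Me_1_5 (u : Fin 7 → ℝ) (t : ℝ) : Mmat u t 1 5 = 0 := rfl

lemma Me_1_6 (u : Fin 7 → ℝ) (t : ℝ) : Mmat u t 1 6 = -u 1 * ph (u 6) t := rfl

lemma Me_2_0 (u : Fin 7 → ℝ) (t : ℝ) : Mmat u t 2 0 = 0 := rfl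

lemma Me_2_1 (u : Fin 7 → ℝ) (t : ℝ) : Mmat u t 2 1 = 0 := rfl

lemma Me_2_2 (u : Fin 7 → ℝ) (t : ℝ) : Mmat u t 2 2 = 1 := rfl

lemma Me_2_3 (u : Fin 7 → ℝ) (t : ℝ) : Mmat u t 2 3 = 0 := rfl

lemma Me_2_4 (u : Fin 7 → ℝ) (t : ℝ) : Mmat u t 2 4 = 0 := rfl

lemma Me_2_5 (u : Fin 7 → ℝ) (t : ℝ) : Mmat u t 2 5 = 0 := rfl

lemma Me_2_6 (u : Fin 7 → ℝ) (t : ℝ) : Mmat u t 2 6 = 0 := rfl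

lemma Me_3_0 (u : Fin 7 → ℝ) (t : ℝ) : Mmat u t 3 0 = -u 1 * (Real.exp (t * u 5) * ph (u 6) t) := rfl

lemma Me_3_1 (u : Fin 7 → ℝ) (t : ℝ) : Mmat u t 3 1 = u 0 * (Real.exp (t * u 6) * ph (u 5) t) := rfl

lemma Me_3_2 (u : Fin 7 → ℝ) (t : ℝ) : Mmat u t 3 2 = 0 := rfl

lemma Me_3_3 (u : Fin 7 → ℝ) (t : ℝ) : Mmat u t 3 3 = Real.exp (t * (u 5 + u 6)) := rfl

lemma Me_3_4 (u : Fin 7 → ℝ) (t : ℝ) : Mmat u t 3 4 = 0 := rfl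

lemma Me_3_5 (u : Fin 7 → ℝ) (t : ℝ) : Mmat u t 3 5 = -u 3 * ph (u 5 + u 6) t + u 0 * u 1 * ch (u 5 + u 6) (u 5) t := rfl

lemma Me_3_6 (u : Fin 7 → ℝ) (t : ℝ) : Mmat u t 3 6 = -u 3 * ph (u 5 + u 6) t - u 0 * u 1 * ch (u 5 + u 6) (u 6) t := rfl

lemma Me_4_0 (u : Fin 7 → ℝ) (t : ℝ) : Mmat u t 4 0 = -u 2 * (t * Real.exp (t * u 5)) := rfl

lemma Me_4_1 (u : Fin 7 → ℝ) (t : ℝ) : Mmat u t 4 1 = 0 := rfl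

lemma Me_4_2 (u : Fin 7 → ℝ) (t : ℝ) : Mmat u t 4 2 = u 0 * ph (u 5) t := rfl

lemma Me_4_3 (u : Fin 7 → ℝ) (t : ℝ) : Mmat u t 4 3 = 0 := rfl

lemma Me_4_4 (u : Fin 7 → ℝ) (t : ℝ) : Mmat u t 4 4 = Real.exp (t * u 5) := rfl

lemma Me_4_5 (u : Fin 7 → ℝ) (t : ℝ) : Mmat u t 4 5 = u 0 * u 2 * ch (u 5) (u 5) t - u 4 * ph (u 5) t := rfl

lemma Me_4_6 (u : Fin 7 → ℝ) (t : ℝ) : Mmat u t 4 6 = 0 := rfl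

lemma Me_5_0 (u : Fin 7 → ℝ) (t : ℝ) : Mmat u t 5 0 = 0 := rfl

lemma Me_5_1 (u : Fin 7 → ℝ) (t : ℝ) : Mmat u t 5 1 = 0 := rfl

lemma Me_5_2 (u : Fin 7 → ℝ) (t : ℝ) : Mmat u t 5 2 = 0 := rfl

lemma Me_5_3 (u : Fin 7 → ℝ) (t : ℝ) : Mmat u t 5 3 = 0 := rfl

lemma Me_5_4 (u : Fin 7 → ℝ) (t : ℝ) : Mmat u t 5 4 = 0 := rfl

lemma Me_5_5 (u : Fin 7 → ℝ) (t : ℝ) : Mmat u t 5 5 = 1 := rfl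

lemma Me_5_6 (u : Fin 7 → ℝ) (t : ℝ) : Mmat u t 5 6 = 0 := rfl

lemma Me_6_0 (u : Fin 7 → ℝ) (t : ℝ) : Mmat u t 6 0 = 0 := rfl

lemma Me_6_1 (u : Fin 7 → ℝ) (t : ℝ) : Mmat u t 6 1 = 0 := rfl

lemma Me_6_2 (u : Fin 7 → ℝ) (t : ℝ) : Mmat u t 6 2 = 0 := rfl

lemma Me_6_3 (u : Fin 7 → ℝ) (t : ℝ) : Mmat u t 6 3 = 0 := rfl

lemma Me_6_4 (u : Fin 7 → ℝ) (t : ℝ) : Mmat u t 6 4 = 0 := rfl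

lemma Me_6_5 (u : Fin 7 → ℝ) (t : ℝ) : Mmat u t 6 5 = 0 := rfl

lemma Me_6_6 (u : Fin 7 → ℝ) (t : ℝ) : Mmat u t 6 6 = 1 := rfl

lemma De_0_0 (u : Fin 7 → ℝ) (t : ℝ) : Mder u t 0 0 = u 5 * Real.exp (t * u 5) := rfl

lemma De_0_1 (u : Fin 7 → ℝ) (t : ℝ) : Mder u t 0 1 = 0 := rfl

lemma De_0_2 (u : Fin 7 → ℝ) (t : ℝ) : Mder u t 0 2 = 0 := rfl

lemma De_0_3 (u : Fin 7 → ℝ) (t : ℝ) : Mder u t 0 3 = 0 := rfl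

lemma De_0_4 (u : Fin 7 → ℝ) (t : ℝ) : Mder u t 0 4 = 0 := rfl

lemma De_0_5 (u : Fin 7 → ℝ) (t : ℝ) : Mder u t 0 5 = -u 0 * Real.exp (t * u 5) := rfl

lemma De_0_6 (u : Fin 7 → ℝ) (t : ℝ) : Mder u t 0 6 = 0 := rfl

lemma De_1_0 (u : Fin 7 → ℝ) (t : ℝ) : Mder u t 1 0 = 0 := rfl

lemma De_1_1 (u : Fin 7 → ℝ) (t : ℝ) : Mder u t 1 1 = u 6 * Real.exp (t * u 6) := rfl

lemma De_1_2 (u : Fin 7 → ℝ) (t : ℝ) : Mder u t 1 2 = 0 := rfl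

lemma De_1_3 (u : Fin 7 → ℝ) (t : ℝ) : Mder u t 1 3 = 0 := rfl

lemma De_1_4 (u : Fin 7 → ℝ) (t : ℝ) : Mder u t 1 4 = 0 := rfl

lemma De_1_5 (u : Fin 7 → ℝ) (t : ℝ) : Mder u t 1 5 = 0 := rfl

lemma De_1_6 (u : Fin 7 → ℝ) (t : ℝ) : Mder u t 1 6 = -u 1 * Real.exp (t * u 6) := rfl

lemma De_2_0 (u : Fin 7 → ℝ) (t : ℝ) : Mder u t 2 0 = 0 := rfl

lemma De_2_1 (u : Fin 7 → ℝ) (t : ℝ) : Mder u t 2 1 = 0 := rfl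

lemma De_2_2 (u : Fin 7 → ℝ) (t : ℝ) : Mder u t 2 2 = 0 := rfl

lemma De_2_3 (u : Fin 7 → ℝ) (t : ℝ) : Mder u t 2 3 = 0 := rfl

lemma De_2_4 (u : Fin 7 → ℝ) (t : ℝ) : Mder u t 2 4 = 0 := rfl

lemma De_2_5 (u : Fin 7 → ℝ) (t : ℝ) : Mder u t 2 5 = 0 := rfl

lemma De_2_6 (u : Fin 7 → ℝ) (t : ℝ) : Mder u t 2 6 = 0 := rfl

lemma De_3_0 (u : Fin 7 → ℝ) (t : ℝ) : Mder u t 3 0 = -u 1 * (Real.exp (t * u 5) + (u 5 + u 6) * (Real.exp (t * u 5) * ph (u 6) t)) := rfl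

lemma De_3_1 (u : Fin 7 → ℝ) (t : ℝ) : Mder u t 3 1 = u 0 * (Real.exp (t * u 6) + (u 6 + u 5) * (Real.exp (t * u 6) * ph (u 5) t)) := rfl

lemma De_3_2 (u : Fin 7 → ℝ) (t : ℝ) : Mder u t 3 2 = 0 := rfl

lemma De_3_3 (u : Fin 7 → ℝ) (t : ℝ) : Mder u t 3 3 = (u 5 + u 6) * Real.exp (t * (u 5 + u 6)) := rfl

lemma De_3_4 (u : Fin 7 → ℝ) (t : ℝ) : Mder u t 3 4 = 0 := rfl

lemma De_3_5 (u : Fin 7 → ℝ) (t : ℝ) : Mder u t 3 5 = -u 3 * Real.exp (t * (u 5 + u 6)) + u 0 * u 1 * (ph (u 5) t + (u 5 + u 6) * ch (u 5 + u 6) (u 5) t) := rfl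

lemma De_3_6 (u : Fin 7 → ℝ) (t : ℝ) : Mder u t 3 6 = -u 3 * Real.exp (t * (u 5 + u 6)) - u 0 * u 1 * (ph (u 6) t + (u 5 + u 6) * ch (u 5 + u 6) (u 6) t) := rfl

lemma De_4_0 (u : Fin 7 → ℝ) (t : ℝ) : Mder u t 4 0 = -u 2 * (Real.exp (t * u 5) + u 5 * (t * Real.exp (t * u 5))) := rfl

lemma De_4_1 (u : Fin 7 → ℝ) (t : ℝ) : Mder u t 4 1 = 0 := rfl

lemma De_4_2 (u : Fin 7 → ℝ) (t : ℝ) : Mder u t 4 2 = u 0 * Real.exp (t * u 5) := rfl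

lemma De_4_3 (u : Fin 7 → ℝ) (t : ℝ) : Mder u t 4 3 = 0 := rfl

lemma De_4_4 (u : Fin 7 → ℝ) (t : ℝ) : Mder u t 4 4 = u 5 * Real.exp (t * u 5) := rfl

lemma De_4_5 (u : Fin 7 → ℝ) (t : ℝ) : Mder u t 4 5 = u 0 * u 2 * (ph (u 5) t + u 5 * ch (u 5) (u 5) t) - u 4 * Real.exp (t * u 5) := rfl

lemma De_4_6 (u : Fin 7 → ℝ) (t : ℝ) : Mder u t 4 6 = 0 := rfl

lemma De_5_0 (u : Fin 7 → ℝ) (t : ℝ) : Mder u t 5 0 = 0 := rfl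

lemma De_5_1 (u : Fin 7 → ℝ) (t : ℝ) : Mder u t 5 1 = 0 := rfl

lemma De_5_2 (u : Fin 7 → ℝ) (t : ℝ) : Mder u t 5 2 = 0 := rfl

lemma De_5_3 (u : Fin 7 → ℝ) (t : ℝ) : Mder u t 5 3 = 0 := rfl

lemma De_5_4 (u : Fin 7 → ℝ) (t : ℝ) : Mder u t 5 4 = 0 := rfl

lemma De_5_5 (u : Fin 7 → ℝ) (t : ℝ) : Mder u t 5 5 = 0 := rfl

lemma De_5_6 (u : Fin 7 → ℝ) (t : ℝ) : Mder u t 5 6 = 0 := rfl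

lemma De_6_0 (u : Fin 7 → ℝ) (t : ℝ) : Mder u t 6 0 = 0 := rfl

lemma De_6_1 (u : Fin 7 → ℝ) (t : ℝ) : Mder u t 6 1 = 0 := rfl

lemma De_6_2 (u : Fin 7 → ℝ) (t : ℝ) : Mder u t 6 2 = 0 := rfl

lemma De_6_3 (u : Fin 7 → ℝ) (t : ℝ) : Mder u t 6 3 = 0 := rfl

lemma De_6_4 (u : Fin 7 → ℝ) (t : ℝ) : Mder u t 6 4 = 0 := rfl

lemma De_6_5 (u : Fin 7 → ℝ) (t : ℝ) : Mder u t 6 5 = 0 := rfl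

lemma De_6_6 (u : Fin 7 → ℝ) (t : ℝ) : Mder u t 6 6 = 0 := rfl

lemma mule_0_0 (u : Fin 7 → ℝ) (t : ℝ) : (adlit u * Mmat u t) 0 0 = Mder u t 0 0 := by
  rw [Matrix.mul_apply, Fin.sum_univ_seven]
  simp only [Ae_0_0, Ae_0_1, Ae_0_2, Ae_0_3, Ae_0_4, Ae_0_5, Ae_0_6, Me_0_0, Me_1_0, Me_2_0, Me_3_0, Me_4_0, Me_5_0, Me_6_0, De_0_0, exp_eq_ph]
  ring

lemma mule_0_1 (u : Fin 7 → ℝ) (t : ℝ) : (adlit u * Mmat u t) 0 1 = Mder u t 0 1 := by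
  rw [Matrix.mul_apply, Fin.sum_univ_seven]
  simp only [Ae_0_0, Ae_0_1, Ae_0_2, Ae_0_3, Ae_0_4, Ae_0_5, Ae_0_6, Me_0_1, Me_1_1, Me_2_1, Me_3_1, Me_4_1, Me_5_1, Me_6_1, De_0_1, exp_eq_ph]
  ring

lemma mule_0_2 (u : Fin 7 → ℝ) (t : ℝ) : (adlit u * Mmat u t) 0 2 = Mder u t 0 2 := by
  rw [Matrix.mul_apply, Fin.sum_univ_seven]
  simp only [Ae_0_0, Ae_0_1, Ae_0_2, Ae_0_3, Ae_0_4, Ae_0_5, Ae_0_6, Me_0_2, Me_1_2, Me_2_2, Me_3_2, Me_4_2, Me_5_2, Me_6_2, De_0_2, exp_eq_ph]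
  ring

lemma mule_0_3 (u : Fin 7 → ℝ) (t : ℝ) : (adlit u * Mmat u t) 0 3 = Mder u t 0 3 := by
  rw [Matrix.mul_apply, Fin.sum_univ_seven]
  simp only [Ae_0_0, Ae_0_1, Ae_0_2, Ae_0_3, Ae_0_4, Ae_0_5, Ae_0_6, Me_0_3, Me_1_3, Me_2_3, Me_3_3, Me_4_3, Me_5_3, Me_6_3, De_0_3, exp_eq_ph]
  ring

lemma mule_0_4 (u : Fin 7 → ℝ) (t : ℝ) : (adlit u * Mmat u t) 0 4 = Mder u t 0 4 := by
  rw [Matrix.mul_apply, Fin.sum_univ_seven]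
  simp only [Ae_0_0, Ae_0_1, Ae_0_2, Ae_0_3, Ae_0_4, Ae_0_5, Ae_0_6, Me_0_4, Me_1_4, Me_2_4, Me_3_4, Me_4_4, Me_5_4, Me_6_4, De_0_4, exp_eq_ph]
  ring

lemma mule_0_5 (u : Fin 7 → ℝ) (t : ℝ) : (adlit u * Mmat u t) 0 5 = Mder u t 0 5 := by
  rw [Matrix.mul_apply, Fin.sum_univ_seven]
  simp only [Ae_0_0, Ae_0_1, Ae_0_2, Ae_0_3, Ae_0_4, Ae_0_5, Ae_0_6, Me_0_5, Me_1_5, Me_2_5, Me_3_5, Me_4_5, Me_5_5, Me_6_5, De_0_5, exp_eq_ph]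
  ring

lemma mule_0_6 (u : Fin 7 → ℝ) (t : ℝ) : (adlit u * Mmat u t) 0 6 = Mder u t 0 6 := by
  rw [Matrix.mul_apply, Fin.sum_univ_seven]
  simp only [Ae_0_0, Ae_0_1, Ae_0_2, Ae_0_3, Ae_0_4, Ae_0_5, Ae_0_6, Me_0_6, Me_1_6, Me_2_6, Me_3_6, Me_4_6, Me_5_6, Me_6_6, De_0_6, exp_eq_ph]
  ring

lemma mule_1_0 (u : Fin 7 → ℝ) (t : ℝ) : (adlit u * Mmat u t) 1 0 = Mder u t 1 0 := by
  rw [Matrix.mul_apply, Fin.sum_univ_seven]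
  simp only [Ae_1_0, Ae_1_1, Ae_1_2, Ae_1_3, Ae_1_4, Ae_1_5, Ae_1_6, Me_0_0, Me_1_0, Me_2_0, Me_3_0, Me_4_0, Me_5_0, Me_6_0, De_1_0, exp_eq_ph]
  ring

lemma mule_1_1 (u : Fin 7 → ℝ) (t : ℝ) : (adlit u * Mmat u t) 1 1 = Mder u t 1 1 := by
  rw [Matrix.mul_apply, Fin.sum_univ_seven]
  simp only [Ae_1_0, Ae_1_1, Ae_1_2, Ae_1_3, Ae_1_4, Ae_1_5, Ae_1_6, Me_0_1, Me_1_1, Me_2_1, Me_3_1, Me_4_1, Me_5_1, Me_6_1, De_1_1, exp_eq_ph]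
  ring

lemma mule_1_2 (u : Fin 7 → ℝ) (t : ℝ) : (adlit u * Mmat u t) 1 2 = Mder u t 1 2 := by
  rw [Matrix.mul_apply, Fin.sum_univ_seven]
  simp only [Ae_1_0, Ae_1_1, Ae_1_2, Ae_1_3, Ae_1_4, Ae_1_5, Ae_1_6, Me_0_2, Me_1_2, Me_2_2, Me_3_2, Me_4_2, Me_5_2, Me_6_2, De_1_2, exp_eq_ph]
  ring

lemma mule_1_3 (u : Fin 7 → ℝ) (t : ℝ) : (adlit u * Mmat u t) 1 3 = Mder u t 1 3 := by
  rw [Matrix.mul_apply, Fin.sum_univ_seven]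
  simp only [Ae_1_0, Ae_1_1, Ae_1_2, Ae_1_3, Ae_1_4, Ae_1_5, Ae_1_6, Me_0_3, Me_1_3, Me_2_3, Me_3_3, Me_4_3, Me_5_3, Me_6_3, De_1_3, exp_eq_ph]
  ring

lemma mule_1_4 (u : Fin 7 → ℝ) (t : ℝ) : (adlit u * Mmat u t) 1 4 = Mder u t 1 4 := by
  rw [Matrix.mul_apply, Fin.sum_univ_seven]
  simp only [Ae_1_0, Ae_1_1, Ae_1_2, Ae_1_3, Ae_1_4, Ae_1_5, Ae_1_6, Me_0_4, Me_1_4, Me_2_4, Me_3_4, Me_4_4, Me_5_4, Me_6_4, De_1_4, exp_eq_ph]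
  ring

lemma mule_1_5 (u : Fin 7 → ℝ) (t : ℝ) : (adlit u * Mmat u t) 1 5 = Mder u t 1 5 := by
  rw [Matrix.mul_apply, Fin.sum_univ_seven]
  simp only [Ae_1_0, Ae_1_1, Ae_1_2, Ae_1_3, Ae_1_4, Ae_1_5, Ae_1_6, Me_0_5, Me_1_5, Me_2_5, Me_3_5, Me_4_5, Me_5_5, Me_6_5, De_1_5, exp_eq_ph]
  ring

lemma mule_1_6 (u : Fin 7 → ℝ) (t : ℝ) : (adlit u * Mmat u t) 1 6 = Mder u t 1 6 := by
  rw [Matrix.mul_apply, Fin.sum_univ_seven]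
  simp only [Ae_1_0, Ae_1_1, Ae_1_2, Ae_1_3, Ae_1_4, Ae_1_5, Ae_1_6, Me_0_6, Me_1_6, Me_2_6, Me_3_6, Me_4_6, Me_5_6, Me_6_6, De_1_6, exp_eq_ph]
  ring

lemma mule_2_0 (u : Fin 7 → ℝ) (t : ℝ) : (adlit u * Mmat u t) 2 0 = Mder u t 2 0 := by
  rw [Matrix.mul_apply, Fin.sum_univ_seven]
  simp only [Ae_2_0, Ae_2_1, Ae_2_2, Ae_2_3, Ae_2_4, Ae_2_5, Ae_2_6, Me_0_0, Me_1_0, Me_2_0, Me_3_0, Me_4_0, Me_5_0, Me_6_0, De_2_0, exp_eq_ph]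
  ring

lemma mule_2_1 (u : Fin 7 → ℝ) (t : ℝ) : (adlit u * Mmat u t) 2 1 = Mder u t 2 1 := by
  rw [Matrix.mul_apply, Fin.sum_univ_seven]
  simp only [Ae_2_0, Ae_2_1, Ae_2_2, Ae_2_3, Ae_2_4, Ae_2_5, Ae_2_6, Me_0_1, Me_1_1, Me_2_1, Me_3_1, Me_4_1, Me_5_1, Me_6_1, De_2_1, exp_eq_ph]
  ring

lemma mule_2_2 (u : Fin 7 → ℝ) (t : ℝ) : (adlit u * Mmat u t) 2 2 = Mder u t 2 2 := by
  rw [Matrix.mul_apply, Fin.sum_univ_seven]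
  simp only [Ae_2_0, Ae_2_1, Ae_2_2, Ae_2_3, Ae_2_4, Ae_2_5, Ae_2_6, Me_0_2, Me_1_2, Me_2_2, Me_3_2, Me_4_2, Me_5_2, Me_6_2, De_2_2, exp_eq_ph]
  ring

lemma mule_2_3 (u : Fin 7 → ℝ) (t : ℝ) : (adlit u * Mmat u t) 2 3 = Mder u t 2 3 := by
  rw [Matrix.mul_apply, Fin.sum_univ_seven]
  simp only [Ae_2_0, Ae_2_1, Ae_2_2, Ae_2_3, Ae_2_4, Ae_2_5, Ae_2_6, Me_0_3, Me_1_3, Me_2_3, Me_3_3, Me_4_3, Me_5_3, Me_6_3, De_2_3, exp_eq_ph]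
  ring

lemma mule_2_4 (u : Fin 7 → ℝ) (t : ℝ) : (adlit u * Mmat u t) 2 4 = Mder u t 2 4 := by
  rw [Matrix.mul_apply, Fin.sum_univ_seven]
  simp only [Ae_2_0, Ae_2_1, Ae_2_2, Ae_2_3, Ae_2_4, Ae_2_5, Ae_2_6, Me_0_4, Me_1_4, Me_2_4, Me_3_4, Me_4_4, Me_5_4, Me_6_4, De_2_4, exp_eq_ph]
  ring

lemma mule_2_5 (u : Fin 7 → ℝ) (t : ℝ) : (adlit u * Mmat u t) 2 5 = Mder u t 2 5 := by
  rw [Matrix.mul_apply, Fin.sum_univ_seven]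
  simp only [Ae_2_0, Ae_2_1, Ae_2_2, Ae_2_3, Ae_2_4, Ae_2_5, Ae_2_6, Me_0_5, Me_1_5, Me_2_5, Me_3_5, Me_4_5, Me_5_5, Me_6_5, De_2_5, exp_eq_ph]
  ring

lemma mule_2_6 (u : Fin 7 → ℝ) (t : ℝ) : (adlit u * Mmat u t) 2 6 = Mder u t 2 6 := by
  rw [Matrix.mul_apply, Fin.sum_univ_seven]
  simp only [Ae_2_0, Ae_2_1, Ae_2_2, Ae_2_3, Ae_2_4, Ae_2_5, Ae_2_6, Me_0_6, Me_1_6, Me_2_6, Me_3_6, Me_4_6, Me_5_6, Me_6_6, De_2_6, exp_eq_ph]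
  ring

lemma mule_3_0 (u : Fin 7 → ℝ) (t : ℝ) : (adlit u * Mmat u t) 3 0 = Mder u t 3 0 := by
  rw [Matrix.mul_apply, Fin.sum_univ_seven]
  simp only [Ae_3_0, Ae_3_1, Ae_3_2, Ae_3_3, Ae_3_4, Ae_3_5, Ae_3_6, Me_0_0, Me_1_0, Me_2_0, Me_3_0, Me_4_0, Me_5_0, Me_6_0, De_3_0, exp_eq_ph]
  ring

lemma mule_3_1 (u : Fin 7 → ℝ) (t : ℝ) : (adlit u * Mmat u t) 3 1 = Mder u t 3 1 := by
  rw [Matrix.mul_apply, Fin.sum_univ_seven]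
  simp only [Ae_3_0, Ae_3_1, Ae_3_2, Ae_3_3, Ae_3_4, Ae_3_5, Ae_3_6, Me_0_1, Me_1_1, Me_2_1, Me_3_1, Me_4_1, Me_5_1, Me_6_1, De_3_1, exp_eq_ph]
  ring

lemma mule_3_2 (u : Fin 7 → ℝ) (t : ℝ) : (adlit u * Mmat u t) 3 2 = Mder u t 3 2 := by
  rw [Matrix.mul_apply, Fin.sum_univ_seven]
  simp only [Ae_3_0, Ae_3_1, Ae_3_2, Ae_3_3, Ae_3_4, Ae_3_5, Ae_3_6, Me_0_2, Me_1_2, Me_2_2, Me_3_2, Me_4_2, Me_5_2, Me_6_2, De_3_2, exp_eq_ph]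
  ring

lemma mule_3_3 (u : Fin 7 → ℝ) (t : ℝ) : (adlit u * Mmat u t) 3 3 = Mder u t 3 3 := by
  rw [Matrix.mul_apply, Fin.sum_univ_seven]
  simp only [Ae_3_0, Ae_3_1, Ae_3_2, Ae_3_3, Ae_3_4, Ae_3_5, Ae_3_6, Me_0_3, Me_1_3, Me_2_3, Me_3_3, Me_4_3, Me_5_3, Me_6_3, De_3_3, exp_eq_ph]
  ring

lemma mule_3_4 (u : Fin 7 → ℝ) (t : ℝ) : (adlit u * Mmat u t) 3 4 = Mder u t 3 4 := by
  rw [Matrix.mul_apply, Fin.sum_univ_seven]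
  simp only [Ae_3_0, Ae_3_1, Ae_3_2, Ae_3_3, Ae_3_4, Ae_3_5, Ae_3_6, Me_0_4, Me_1_4, Me_2_4, Me_3_4, Me_4_4, Me_5_4, Me_6_4, De_3_4, exp_eq_ph]
  ring

lemma mule_3_5 (u : Fin 7 → ℝ) (t : ℝ) : (adlit u * Mmat u t) 3 5 = Mder u t 3 5 := by
  rw [Matrix.mul_apply, Fin.sum_univ_seven]
  simp only [Ae_3_0, Ae_3_1, Ae_3_2, Ae_3_3, Ae_3_4, Ae_3_5, Ae_3_6, Me_0_5, Me_1_5, Me_2_5, Me_3_5, Me_4_5, Me_5_5, Me_6_5, De_3_5, exp_eq_ph]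
  ring

lemma mule_3_6 (u : Fin 7 → ℝ) (t : ℝ) : (adlit u * Mmat u t) 3 6 = Mder u t 3 6 := by
  rw [Matrix.mul_apply, Fin.sum_univ_seven]
  simp only [Ae_3_0, Ae_3_1, Ae_3_2, Ae_3_3, Ae_3_4, Ae_3_5, Ae_3_6, Me_0_6, Me_1_6, Me_2_6, Me_3_6, Me_4_6, Me_5_6, Me_6_6, De_3_6, exp_eq_ph]
  ring

lemma mule_4_0 (u : Fin 7 → ℝ) (t : ℝ) : (adlit u * Mmat u t) 4 0 = Mder u t 4 0 := by
  rw [Matrix.mul_apply, Fin.sum_univ_seven]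
  simp only [Ae_4_0, Ae_4_1, Ae_4_2, Ae_4_3, Ae_4_4, Ae_4_5, Ae_4_6, Me_0_0, Me_1_0, Me_2_0, Me_3_0, Me_4_0, Me_5_0, Me_6_0, De_4_0, exp_eq_ph]
  ring

lemma mule_4_1 (u : Fin 7 → ℝ) (t : ℝ) : (adlit u * Mmat u t) 4 1 = Mder u t 4 1 := by
  rw [Matrix.mul_apply, Fin.sum_univ_seven]
  simp only [Ae_4_0, Ae_4_1, Ae_4_2, Ae_4_3, Ae_4_4, Ae_4_5, Ae_4_6, Me_0_1, Me_1_1, Me_2_1, Me_3_1, Me_4_1, Me_5_1, Me_6_1, De_4_1, exp_eq_ph]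
  ring

lemma mule_4_2 (u : Fin 7 → ℝ) (t : ℝ) : (adlit u * Mmat u t) 4 2 = Mder u t 4 2 := by
  rw [Matrix.mul_apply, Fin.sum_univ_seven]
  simp only [Ae_4_0, Ae_4_1, Ae_4_2, Ae_4_3, Ae_4_4, Ae_4_5, Ae_4_6, Me_0_2, Me_1_2, Me_2_2, Me_3_2, Me_4_2, Me_5_2, Me_6_2, De_4_2, exp_eq_ph]
  ring

lemma mule_4_3 (u : Fin 7 → ℝ) (t : ℝ) : (adlit u * Mmat u t) 4 3 = Mder u t 4 3 := by
  rw [Matrix.mul_apply, Fin.sum_univ_seven]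
  simp only [Ae_4_0, Ae_4_1, Ae_4_2, Ae_4_3, Ae_4_4, Ae_4_5, Ae_4_6, Me_0_3, Me_1_3, Me_2_3, Me_3_3, Me_4_3, Me_5_3, Me_6_3, De_4_3, exp_eq_ph]
  ring

lemma mule_4_4 (u : Fin 7 → ℝ) (t : ℝ) : (adlit u * Mmat u t) 4 4 = Mder u t 4 4 := by
  rw [Matrix.mul_apply, Fin.sum_univ_seven]
  simp only [Ae_4_0, Ae_4_1, Ae_4_2, Ae_4_3, Ae_4_4, Ae_4_5, Ae_4_6, Me_0_4, Me_1_4, Me_2_4, Me_3_4, Me_4_4, Me_5_4, Me_6_4, De_4_4, exp_eq_ph]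
  ring

lemma mule_4_5 (u : Fin 7 → ℝ) (t : ℝ) : (adlit u * Mmat u t) 4 5 = Mder u t 4 5 := by
  rw [Matrix.mul_apply, Fin.sum_univ_seven]
  simp only [Ae_4_0, Ae_4_1, Ae_4_2, Ae_4_3, Ae_4_4, Ae_4_5, Ae_4_6, Me_0_5, Me_1_5, Me_2_5, Me_3_5, Me_4_5, Me_5_5, Me_6_5, De_4_5, exp_eq_ph]
  ring

lemma mule_4_6 (u : Fin 7 → ℝ) (t : ℝ) : (adlit u * Mmat u t) 4 6 = Mder u t 4 6 := by
  rw [Matrix.mul_apply, Fin.sum_univ_seven]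
  simp only [Ae_4_0, Ae_4_1, Ae_4_2, Ae_4_3, Ae_4_4, Ae_4_5, Ae_4_6, Me_0_6, Me_1_6, Me_2_6, Me_3_6, Me_4_6, Me_5_6, Me_6_6, De_4_6, exp_eq_ph]
  ring

lemma mule_5_0 (u : Fin 7 → ℝ) (t : ℝ) : (adlit u * Mmat u t) 5 0 = Mder u t 5 0 := by
  rw [Matrix.mul_apply, Fin.sum_univ_seven]
  simp only [Ae_5_0, Ae_5_1, Ae_5_2, Ae_5_3, Ae_5_4, Ae_5_5, Ae_5_6, Me_0_0, Me_1_0, Me_2_0, Me_3_0, Me_4_0, Me_5_0, Me_6_0, De_5_0, exp_eq_ph]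
  ring

lemma mule_5_1 (u : Fin 7 → ℝ) (t : ℝ) : (adlit u * Mmat u t) 5 1 = Mder u t 5 1 := by
  rw [Matrix.mul_apply, Fin.sum_univ_seven]
  simp only [Ae_5_0, Ae_5_1, Ae_5_2, Ae_5_3, Ae_5_4, Ae_5_5, Ae_5_6, Me_0_1, Me_1_1, Me_2_1, Me_3_1, Me_4_1, Me_5_1, Me_6_1, De_5_1, exp_eq_ph]
  ring

lemma mule_5_2 (u : Fin 7 → ℝ) (t : ℝ) : (adlit u * Mmat u t) 5 2 = Mder u t 5 2 := by
  rw [Matrix.mul_apply, Fin.sum_univ_seven]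
  simp only [Ae_5_0, Ae_5_1, Ae_5_2, Ae_5_3, Ae_5_4, Ae_5_5, Ae_5_6, Me_0_2, Me_1_2, Me_2_2, Me_3_2, Me_4_2, Me_5_2, Me_6_2, De_5_2, exp_eq_ph]
  ring

lemma mule_5_3 (u : Fin 7 → ℝ) (t : ℝ) : (adlit u * Mmat u t) 5 3 = Mder u t 5 3 := by
  rw [Matrix.mul_apply, Fin.sum_univ_seven]
  simp only [Ae_5_0, Ae_5_1, Ae_5_2, Ae_5_3, Ae_5_4, Ae_5_5, Ae_5_6, Me_0_3, Me_1_3, Me_2_3, Me_3_3, Me_4_3, Me_5_3, Me_6_3, De_5_3, exp_eq_ph]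
  ring

lemma mule_5_4 (u : Fin 7 → ℝ) (t : ℝ) : (adlit u * Mmat u t) 5 4 = Mder u t 5 4 := by
  rw [Matrix.mul_apply, Fin.sum_univ_seven]
  simp only [Ae_5_0, Ae_5_1, Ae_5_2, Ae_5_3, Ae_5_4, Ae_5_5, Ae_5_6, Me_0_4, Me_1_4, Me_2_4, Me_3_4, Me_4_4, Me_5_4, Me_6_4, De_5_4, exp_eq_ph]
  ring

lemma mule_5_5 (u : Fin 7 → ℝ) (t : ℝ) : (adlit u * Mmat u t) 5 5 = Mder u t 5 5 := by
  rw [Matrix.mul_apply, Fin.sum_univ_seven]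
  simp only [Ae_5_0, Ae_5_1, Ae_5_2, Ae_5_3, Ae_5_4, Ae_5_5, Ae_5_6, Me_0_5, Me_1_5, Me_2_5, Me_3_5, Me_4_5, Me_5_5, Me_6_5, De_5_5, exp_eq_ph]
  ring

lemma mule_5_6 (u : Fin 7 → ℝ) (t : ℝ) : (adlit u * Mmat u t) 5 6 = Mder u t 5 6 := by
  rw [Matrix.mul_apply, Fin.sum_univ_seven]
  simp only [Ae_5_0, Ae_5_1, Ae_5_2, Ae_5_3, Ae_5_4, Ae_5_5, Ae_5_6, Me_0_6, Me_1_6, Me_2_6, Me_3_6, Me_4_6, Me_5_6, Me_6_6, De_5_6, exp_eq_ph]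
  ring

lemma mule_6_0 (u : Fin 7 → ℝ) (t : ℝ) : (adlit u * Mmat u t) 6 0 = Mder u t 6 0 := by
  rw [Matrix.mul_apply, Fin.sum_univ_seven]
  simp only [Ae_6_0, Ae_6_1, Ae_6_2, Ae_6_3, Ae_6_4, Ae_6_5, Ae_6_6, Me_0_0, Me_1_0, Me_2_0, Me_3_0, Me_4_0, Me_5_0, Me_6_0, De_6_0, exp_eq_ph]
  ring

lemma mule_6_1 (u : Fin 7 → ℝ) (t : ℝ) : (adlit u * Mmat u t) 6 1 = Mder u t 6 1 := by
  rw [Matrix.mul_apply, Fin.sum_univ_seven]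
  simp only [Ae_6_0, Ae_6_1, Ae_6_2, Ae_6_3, Ae_6_4, Ae_6_5, Ae_6_6, Me_0_1, Me_1_1, Me_2_1, Me_3_1, Me_4_1, Me_5_1, Me_6_1, De_6_1, exp_eq_ph]
  ring

lemma mule_6_2 (u : Fin 7 → ℝ) (t : ℝ) : (adlit u * Mmat u t) 6 2 = Mder u t 6 2 := by
  rw [Matrix.mul_apply, Fin.sum_univ_seven]
  simp only [Ae_6_0, Ae_6_1, Ae_6_2, Ae_6_3, Ae_6_4, Ae_6_5, Ae_6_6, Me_0_2, Me_1_2, Me_2_2, Me_3_2, Me_4_2, Me_5_2, Me_6_2, De_6_2, exp_eq_ph]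
  ring

lemma mule_6_3 (u : Fin 7 → ℝ) (t : ℝ) : (adlit u * Mmat u t) 6 3 = Mder u t 6 3 := by
  rw [Matrix.mul_apply, Fin.sum_univ_seven]
  simp only [Ae_6_0, Ae_6_1, Ae_6_2, Ae_6_3, Ae_6_4, Ae_6_5, Ae_6_6, Me_0_3, Me_1_3, Me_2_3, Me_3_3, Me_4_3, Me_5_3, Me_6_3, De_6_3, exp_eq_ph]
  ring

lemma mule_6_4 (u : Fin 7 → ℝ) (t : ℝ) : (adlit u * Mmat u t) 6 4 = Mder u t 6 4 := by
  rw [Matrix.mul_apply, Fin.sum_univ_seven]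
  simp only [Ae_6_0, Ae_6_1, Ae_6_2, Ae_6_3, Ae_6_4, Ae_6_5, Ae_6_6, Me_0_4, Me_1_4, Me_2_4, Me_3_4, Me_4_4, Me_5_4, Me_6_4, De_6_4, exp_eq_ph]
  ring

lemma mule_6_5 (u : Fin 7 → ℝ) (t : ℝ) : (adlit u * Mmat u t) 6 5 = Mder u t 6 5 := by
  rw [Matrix.mul_apply, Fin.sum_univ_seven]
  simp only [Ae_6_0, Ae_6_1, Ae_6_2, Ae_6_3, Ae_6_4, Ae_6_5, Ae_6_6, Me_0_5, Me_1_5, Me_2_5, Me_3_5, Me_4_5, Me_5_5, Me_6_5, De_6_5, exp_eq_ph]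
  ring

lemma mule_6_6 (u : Fin 7 → ℝ) (t : ℝ) : (adlit u * Mmat u t) 6 6 = Mder u t 6 6 := by
  rw [Matrix.mul_apply, Fin.sum_univ_seven]
  simp only [Ae_6_0, Ae_6_1, Ae_6_2, Ae_6_3, Ae_6_4, Ae_6_5, Ae_6_6, Me_0_6, Me_1_6, Me_2_6, Me_3_6, Me_4_6, Me_5_6, Me_6_6, De_6_6, exp_eq_ph]
  ring

lemma mul_Mmat (u : Fin 7 → ℝ) (t : ℝ) : adG4 u * Mmat u t = Mder u t := by
  rw [adG4_eq]
  ext i j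
  fin_cases i <;> fin_cases j
  exacts [mule_0_0 u t, mule_0_1 u t, mule_0_2 u t, mule_0_3 u t, mule_0_4 u t, mule_0_5 u t, mule_0_6 u t, mule_1_0 u t, mule_1_1 u t, mule_1_2 u t, mule_1_3 u t, mule_1_4 u t, mule_1_5 u t, mule_1_6 u t, mule_2_0 u t, mule_2_1 u t, mule_2_2 u t, mule_2_3 u t, mule_2_4 u t, mule_2_5 u t, mule_2_6 u t, mule_3_0 u t, mule_3_1 u t, mule_3_2 u t, mule_3_3 u t, mule_3_4 u t, mule_3_5 u t, mule_3_6 u t, mule_4_0 u t, mule_4_1 u t, mule_4_2 u t, mule_4_3 u t, mule_4_4 u t, mule_4_5 u t, mule_4_6 u t, mule_5_0 u t, mule_5_1 u t, mule_5_2 u t, mule_5_3 u t, mule_5_4 u t, mule_5_5 u t, mule_5_6 u t, mule_6_0 u t, mule_6_1 u t, mule_6_2 u t, mule_6_3 u t, mule_6_4 u t, mule_6_5 u t, mule_6_6 u t]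

lemma hde_0_0 (u : Fin 7 → ℝ) (t : ℝ) : HasDerivAt (fun s => Mmat u s 0 0) (Mder u t 0 0) t := by
  simp only [Me_0_0, De_0_0]
  exact hd_exp (u 5) t

lemma hde_0_1 (u : Fin 7 → ℝ) (t : ℝ) : HasDerivAt (fun s => Mmat u s 0 1) (Mder u t 0 1) t := by
  simp only [Me_0_1, De_0_1]
  exact hasDerivAt_const t (0:ℝ)

lemma hde_0_2 (u : Fin 7 → ℝ) (t : ℝ) : HasDerivAt (fun s => Mmat u s 0 2) (Mder u t 0 2) t := by
  simp only [Me_0_2, De_0_2]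
  exact hasDerivAt_const t (0:ℝ)

lemma hde_0_3 (u : Fin 7 → ℝ) (t : ℝ) : HasDerivAt (fun s => Mmat u s 0 3) (Mder u t 0 3) t := by
  simp only [Me_0_3, De_0_3]
  exact hasDerivAt_const t (0:ℝ)

lemma hde_0_4 (u : Fin 7 → ℝ) (t : ℝ) : HasDerivAt (fun s => Mmat u s 0 4) (Mder u t 0 4) t := by
  simp only [Me_0_4, De_0_4]
  exact hasDerivAt_const t (0:ℝ)

lemma hde_0_5 (u : Fin 7 → ℝ) (t : ℝ) : HasDerivAt (fun s => Mmat u s 0 5) (Mder u t 0 5) t := by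
  simp only [Me_0_5, De_0_5]
  exact HasDerivAt.const_mul (-u 0) (hd_ph (u 5) t)

lemma hde_0_6 (u : Fin 7 → ℝ) (t : ℝ) : HasDerivAt (fun s => Mmat u s 0 6) (Mder u t 0 6) t := by
  simp only [Me_0_6, De_0_6]
  exact hasDerivAt_const t (0:ℝ)

lemma hde_1_0 (u : Fin 7 → ℝ) (t : ℝ) : HasDerivAt (fun s => Mmat u s 1 0) (Mder u t 1 0) t := by
  simp only [Me_1_0, De_1_0]
  exact hasDerivAt_const t (0:ℝ)

lemma hde_1_1 (u : Fin 7 → ℝ) (t : ℝ) : HasDerivAt (fun s => Mmat u s 1 1) (Mder u t 1 1) t := by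
  simp only [Me_1_1, De_1_1]
  exact hd_exp (u 6) t

lemma hde_1_2 (u : Fin 7 → ℝ) (t : ℝ) : HasDerivAt (fun s => Mmat u s 1 2) (Mder u t 1 2) t := by
  simp only [Me_1_2, De_1_2]
  exact hasDerivAt_const t (0:ℝ)

lemma hde_1_3 (u : Fin 7 → ℝ) (t : ℝ) : HasDerivAt (fun s => Mmat u s 1 3) (Mder u t 1 3) t := by
  simp only [Me_1_3, De_1_3]
  exact hasDerivAt_const t (0:ℝ)

lemma hde_1_4 (u : Fin 7 → ℝ) (t : ℝ) : HasDerivAt (fun s => Mmat u s 1 4) (Mder u t 1 4) t := by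
  simp only [Me_1_4, De_1_4]
  exact hasDerivAt_const t (0:ℝ)

lemma hde_1_5 (u : Fin 7 → ℝ) (t : ℝ) : HasDerivAt (fun s => Mmat u s 1 5) (Mder u t 1 5) t := by
  simp only [Me_1_5, De_1_5]
  exact hasDerivAt_const t (0:ℝ)

lemma hde_1_6 (u : Fin 7 → ℝ) (t : ℝ) : HasDerivAt (fun s => Mmat u s 1 6) (Mder u t 1 6) t := by
  simp only [Me_1_6, De_1_6]
  exact HasDerivAt.const_mul (-u 1) (hd_ph (u 6) t)

lemma hde_2_0 (u : Fin 7 → ℝ) (t : ℝ) : HasDerivAt (fun s => Mmat u s 2 0) (Mder u t 2 0) t := by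
  simp only [Me_2_0, De_2_0]
  exact hasDerivAt_const t (0:ℝ)

lemma hde_2_1 (u : Fin 7 → ℝ) (t : ℝ) : HasDerivAt (fun s => Mmat u s 2 1) (Mder u t 2 1) t := by
  simp only [Me_2_1, De_2_1]
  exact hasDerivAt_const t (0:ℝ)

lemma hde_2_2 (u : Fin 7 → ℝ) (t : ℝ) : HasDerivAt (fun s => Mmat u s 2 2) (Mder u t 2 2) t := by
  simp only [Me_2_2, De_2_2]
  exact hasDerivAt_const t (1:ℝ)

lemma hde_2_3 (u : Fin 7 → ℝ) (t : ℝ) : HasDerivAt (fun s => Mmat u s 2 3) (Mder u t 2 3) t := by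
  simp only [Me_2_3, De_2_3]
  exact hasDerivAt_const t (0:ℝ)

lemma hde_2_4 (u : Fin 7 → ℝ) (t : ℝ) : HasDerivAt (fun s => Mmat u s 2 4) (Mder u t 2 4) t := by
  simp only [Me_2_4, De_2_4]
  exact hasDerivAt_const t (0:ℝ)

lemma hde_2_5 (u : Fin 7 → ℝ) (t : ℝ) : HasDerivAt (fun s => Mmat u s 2 5) (Mder u t 2 5) t := by
  simp only [Me_2_5, De_2_5]
  exact hasDerivAt_const t (0:ℝ)

lemma hde_2_6 (u : Fin 7 → ℝ) (t : ℝ) : HasDerivAt (fun s => Mmat u s 2 6) (Mder u t 2 6) t := by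
  simp only [Me_2_6, De_2_6]
  exact hasDerivAt_const t (0:ℝ)

lemma hde_3_0 (u : Fin 7 → ℝ) (t : ℝ) : HasDerivAt (fun s => Mmat u s 3 0) (Mder u t 3 0) t := by
  simp only [Me_3_0, De_3_0]
  exact HasDerivAt.const_mul (-u 1) (hd_expph (u 5) (u 6) t)

lemma hde_3_1 (u : Fin 7 → ℝ) (t : ℝ) : HasDerivAt (fun s => Mmat u s 3 1) (Mder u t 3 1) t := by
  simp only [Me_3_1, De_3_1]
  exact HasDerivAt.const_mul (u 0) (hd_expph (u 6) (u 5) t)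

lemma hde_3_2 (u : Fin 7 → ℝ) (t : ℝ) : HasDerivAt (fun s => Mmat u s 3 2) (Mder u t 3 2) t := by
  simp only [Me_3_2, De_3_2]
  exact hasDerivAt_const t (0:ℝ)

lemma hde_3_3 (u : Fin 7 → ℝ) (t : ℝ) : HasDerivAt (fun s => Mmat u s 3 3) (Mder u t 3 3) t := by
  simp only [Me_3_3, De_3_3]
  exact hd_exp (u 5 + u 6) t

lemma hde_3_4 (u : Fin 7 → ℝ) (t : ℝ) : HasDerivAt (fun s => Mmat u s 3 4) (Mder u t 3 4) t := by
  simp only [Me_3_4, De_3_4]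
  exact hasDerivAt_const t (0:ℝ)

lemma hde_3_5 (u : Fin 7 → ℝ) (t : ℝ) : HasDerivAt (fun s => Mmat u s 3 5) (Mder u t 3 5) t := by
  simp only [Me_3_5, De_3_5]
  exact (HasDerivAt.const_mul (-u 3) (hd_ph (u 5 + u 6) t)).add (HasDerivAt.const_mul (u 0 * u 1) (hd_ch (u 5 + u 6) (u 5) t))

lemma hde_3_6 (u : Fin 7 → ℝ) (t : ℝ) : HasDerivAt (fun s => Mmat u s 3 6) (Mder u t 3 6) t := by
  simp only [Me_3_6, De_3_6]
  exact (HasDerivAt.const_mul (-u 3) (hd_ph (u 5 + u 6) t)).sub (HasDerivAt.const_mul (u 0 * u 1) (hd_ch (u 5 + u 6) (u 6) t))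

lemma hde_4_0 (u : Fin 7 → ℝ) (t : ℝ) : HasDerivAt (fun s => Mmat u s 4 0) (Mder u t 4 0) t := by
  simp only [Me_4_0, De_4_0]
  exact HasDerivAt.const_mul (-u 2) (hd_texp (u 5) t)

lemma hde_4_1 (u : Fin 7 → ℝ) (t : ℝ) : HasDerivAt (fun s => Mmat u s 4 1) (Mder u t 4 1) t := by
  simp only [Me_4_1, De_4_1]
  exact hasDerivAt_const t (0:ℝ)

lemma hde_4_2 (u : Fin 7 → ℝ) (t : ℝ) : HasDerivAt (fun s => Mmat u s 4 2) (Mder u t 4 2) t := by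
  simp only [Me_4_2, De_4_2]
  exact HasDerivAt.const_mul (u 0) (hd_ph (u 5) t)

lemma hde_4_3 (u : Fin 7 → ℝ) (t : ℝ) : HasDerivAt (fun s => Mmat u s 4 3) (Mder u t 4 3) t := by
  simp only [Me_4_3, De_4_3]
  exact hasDerivAt_const t (0:ℝ)

lemma hde_4_4 (u : Fin 7 → ℝ) (t : ℝ) : HasDerivAt (fun s => Mmat u s 4 4) (Mder u t 4 4) t := by
  simp only [Me_4_4, De_4_4]
  exact hd_exp (u 5) t

lemma hde_4_5 (u : Fin 7 → ℝ) (t : ℝ) : HasDerivAt (fun s => Mmat u s 4 5) (Mder u t 4 5) t := by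
  simp only [Me_4_5, De_4_5]
  exact (HasDerivAt.const_mul (u 0 * u 2) (hd_ch (u 5) (u 5) t)).sub (HasDerivAt.const_mul (u 4) (hd_ph (u 5) t))

lemma hde_4_6 (u : Fin 7 → ℝ) (t : ℝ) : HasDerivAt (fun s => Mmat u s 4 6) (Mder u t 4 6) t := by
  simp only [Me_4_6, De_4_6]
  exact hasDerivAt_const t (0:ℝ)

lemma hde_5_0 (u : Fin 7 → ℝ) (t : ℝ) : HasDerivAt (fun s => Mmat u s 5 0) (Mder u t 5 0) t := by
  simp only [Me_5_0, De_5_0]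
  exact hasDerivAt_const t (0:ℝ)

lemma hde_5_1 (u : Fin 7 → ℝ) (t : ℝ) : HasDerivAt (fun s => Mmat u s 5 1) (Mder u t 5 1) t := by
  simp only [Me_5_1, De_5_1]
  exact hasDerivAt_const t (0:ℝ)

lemma hde_5_2 (u : Fin 7 → ℝ) (t : ℝ) : HasDerivAt (fun s => Mmat u s 5 2) (Mder u t 5 2) t := by
  simp only [Me_5_2, De_5_2]
  exact hasDerivAt_const t (0:ℝ)

lemma hde_5_3 (u : Fin 7 → ℝ) (t : ℝ) : HasDerivAt (fun s => Mmat u s 5 3) (Mder u t 5 3) t := by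
  simp only [Me_5_3, De_5_3]
  exact hasDerivAt_const t (0:ℝ)

lemma hde_5_4 (u : Fin 7 → ℝ) (t : ℝ) : HasDerivAt (fun s => Mmat u s 5 4) (Mder u t 5 4) t := by
  simp only [Me_5_4, De_5_4]
  exact hasDerivAt_const t (0:ℝ)

lemma hde_5_5 (u : Fin 7 → ℝ) (t : ℝ) : HasDerivAt (fun s => Mmat u s 5 5) (Mder u t 5 5) t := by
  simp only [Me_5_5, De_5_5]
  exact hasDerivAt_const t (1:ℝ)

lemma hde_5_6 (u : Fin 7 → ℝ) (t : ℝ) : HasDerivAt (fun s => Mmat u s 5 6) (Mder u t 5 6) t := by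
  simp only [Me_5_6, De_5_6]
  exact hasDerivAt_const t (0:ℝ)

lemma hde_6_0 (u : Fin 7 → ℝ) (t : ℝ) : HasDerivAt (fun s => Mmat u s 6 0) (Mder u t 6 0) t := by
  simp only [Me_6_0, De_6_0]
  exact hasDerivAt_const t (0:ℝ)

lemma hde_6_1 (u : Fin 7 → ℝ) (t : ℝ) : HasDerivAt (fun s => Mmat u s 6 1) (Mder u t 6 1) t := by
  simp only [Me_6_1, De_6_1]
  exact hasDerivAt_const t (0:ℝ)

lemma hde_6_2 (u : Fin 7 → ℝ) (t : ℝ) : HasDerivAt (fun s => Mmat u s 6 2) (Mder u t 6 2) t := by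
  simp only [Me_6_2, De_6_2]
  exact hasDerivAt_const t (0:ℝ)

lemma hde_6_3 (u : Fin 7 → ℝ) (t : ℝ) : HasDerivAt (fun s => Mmat u s 6 3) (Mder u t 6 3) t := by
  simp only [Me_6_3, De_6_3]
  exact hasDerivAt_const t (0:ℝ)

lemma hde_6_4 (u : Fin 7 → ℝ) (t : ℝ) : HasDerivAt (fun s => Mmat u s 6 4) (Mder u t 6 4) t := by
  simp only [Me_6_4, De_6_4]
  exact hasDerivAt_const t (0:ℝ)

lemma hde_6_5 (u : Fin 7 → ℝ) (t : ℝ) : HasDerivAt (fun s => Mmat u s 6 5) (Mder u t 6 5) t := by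
  simp only [Me_6_5, De_6_5]
  exact hasDerivAt_const t (0:ℝ)

lemma hde_6_6 (u : Fin 7 → ℝ) (t : ℝ) : HasDerivAt (fun s => Mmat u s 6 6) (Mder u t 6 6) t := by
  simp only [Me_6_6, De_6_6]
  exact hasDerivAt_const t (1:ℝ)

lemma Mmat_zero (u : Fin 7 → ℝ) : Mmat u 0 = 1 := by
  ext i j
  fin_cases i <;> fin_cases j <;>
    simp (config := { decide := true }) [Me_0_0, Me_0_1, Me_0_2, Me_0_3, Me_0_4, Me_0_5, Me_0_6, Me_1_0, Me_1_1, Me_1_2, Me_1_3, Me_1_4, Me_1_5, Me_1_6, Me_2_0, Me_2_1, Me_2_2, Me_2_3, Me_2_4, Me_2_5, Me_2_6, Me_3_0, Me_3_1, Me_3_2, Me_3_3, Me_3_4, Me_3_5, Me_3_6, Me_4_0, Me_4_1, Me_4_2, Me_4_3, Me_4_4, Me_4_5, Me_4_6, Me_5_0, Me_5_1, Me_5_2, Me_5_3, Me_5_4, Me_5_5, Me_5_6, Me_6_0, Me_6_1, Me_6_2, Me_6_3, Me_6_4, Me_6_5, Me_6_6, ph_zero, ch_zero, Matrix.one_appl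y]


lemma exp_adG4 (u : Fin 7 → ℝ) : NormedSpace.exp (adG4 u) = Mmat u 1 := by
  letI : SeminormedRing (Matrix (Fin 7) (Fin 7) ℝ) := Matrix.linftyOpSemiNormedRing
  letI : NormedRing (Matrix (Fin 7) (Fin 7) ℝ) := Matrix.linftyOpNormedRing
  letI : NormedAlgebra ℝ (Matrix (Fin 7) (Fin 7) ℝ) := Matrix.linftyOpNormedAlgebra
  have hmat : ∀ (f : ℝ → Matrix (Fin 7) (Fin 7) ℝ) (Dm : Matrix (Fin 7) (Fin 7) ℝ) (t : ℝ),
      (∀ i j, HasDerivAt (fun s => f s i j) (Dm i j) t) → HasDerivAt f Dm t := by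
    intro f Dm t h
    have hf : f = fun s => ∑ i : Fin 7, ∑ j : Fin 7, Matrix.single i j (f s i j) := by
      funext s; exact Matrix.matrix_eq_sum_single (f s)
    rw [hf, Matrix.matrix_eq_sum_single Dm]
    apply HasDerivAt.fun_sum
    intro i _
    apply HasDerivAt.fun_sum
    intro j _
    have h2 := (h i j).smul_const (Matrix.single i j (1:ℝ))
    have e : ∀ (c : ℝ), c • Matrix.single i j (1:ℝ) = Matrix.single i j c := by
      intro c
      ext a b
      show c * _ = _
      simp [Matrix.single, Matrix.of_apply, mul_ite, mul_one, mul_zero]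
    simpa [e] using h2
  have hM : ∀ t, HasDerivAt (fun s => Mmat u s) (adG4 u * Mmat u t) t := by
    intro t
    rw [mul_Mmat]
    apply hmat
    intro i j
    fin_cases i <;> fin_cases j
    exacts [hde_0_0 u t, hde_0_1 u t, hde_0_2 u t, hde_0_3 u t, hde_0_4 u t, hde_0_5 u t, hde_0_6 u t, hde_1_0 u t, hde_1_1 u t, hde_1_2 u t, hde_1_3 u t, hde_1_4 u t, hde_1_5 u t, hde_1_6 u t, hde_2_0 u t, hde_2_1 u t, hde_2_2 u t, hde_2_3 u t, hde_2_4 u t, hde_2_5 u t, hde_2_6 u t, hde_3_0 u t, hde_3_1 u t, hde_3_2 u t, hde_3_3 u t, hde_3_4 u t, hde_3_5 u t, hde_3_6 u t, hde_4_0 u t, hde_4_1 u t, hde_4_2 u t, hde_4_3 u t, hde_4_4 u t, hde_4_5 u t, hde_4_6 u t, hde_5_0 u t, hde_5_1 u t, hde_5_2 u t, hde_5_3 u t, hde_5_4 u t, hde_5_5 u t, hde_5_6 u t, hde_6_0 u t, hde_6_1 u t, hde_6_2 u t, hde_6_3 u t, hde_6_4 u t, hde_6_5 u t, hde_6_6 u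 t]
  set B := adG4 u with hB
  have hexp : ∀ t : ℝ, HasDerivAt (fun s : ℝ => NormedSpace.exp (s • B)) (B * NormedSpace.exp (t • B)) t :=
    fun t => hasDerivAt_exp_smul_const' B t
  have hneg : ∀ t : ℝ, HasDerivAt (fun s : ℝ => NormedSpace.exp (-(s • B)))
      (-(B * NormedSpace.exp (-(t • B)))) t := by
    intro t
    have h1 : HasDerivAt (fun s : ℝ => -s) (-1 : ℝ) t := (hasDerivAt_id t).neg
    have h2 := HasDerivAt.scomp (𝕜 := ℝ) t (hexp (-t)) h1
    simp only [Function.comp_def, neg_smul, one_smul] at h2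
    exact h2
  have hcomm : ∀ t : ℝ, NormedSpace.exp (-(t • B)) * B = B * NormedSpace.exp (-(t • B)) := by
    intro t
    rw [← neg_smul]
    exact (((Commute.refl B).smul_left (-t)).exp_left).eq
  have hD : ∀ t : ℝ, HasDerivAt (fun s => NormedSpace.exp (-(s • B)) * Mmat u s)
      (0 : Matrix (Fin 7) (Fin 7) ℝ) t := by
    intro t
    have h3 := (hneg t).mul (hM t)
    refine h3.congr_deriv ?_
    rw [← mul_assoc, hcomm t, neg_mul, mul_assoc]
    exact (neg_add_cancel _)
  have hdiff : Differentiable ℝ (fun s => NormedSpace.exp (-(s • B)) * Mmat u s) :=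
    fun s => (hD s).differentiableAt
  have hfd : ∀ s, fderiv ℝ (fun s => NormedSpace.exp (-(s • B)) * Mmat u s) s = 0 := by
    intro s
    rw [(hasDerivAt_iff_hasFDerivAt.1 (hD s)).fderiv]
    ext v
    simp
  have hconst := is_const_of_fderiv_eq_zero hdiff hfd 1 0
  have h0 : NormedSpace.exp (-((0:ℝ) • B)) * Mmat u 0 = 1 := by
    simp [Mmat_zero, NormedSpace.exp_zero]
  have h1 : NormedSpace.exp (-B) * Mmat u 1 = 1 := by
    have := hconst.trans h0
    simpa using this
  have hinv : NormedSpace.exp B * NormedSpace.exp (-B) = 1 := by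
    rw [← Matrix.exp_add_of_commute B (-B) ((Commute.refl B).neg_right)]
    simp
  calc NormedSpace.exp B = NormedSpace.exp B * (NormedSpace.exp (-B) * Mmat u 1) := by
        rw [h1, mul_one]
    _ = (NormedSpace.exp B * NormedSpace.exp (-B)) * Mmat u 1 := by rw [mul_assoc]
    _ = Mmat u 1 := by rw [hinv, one_mul]

lemma vm_0 (α u : Fin 7 → ℝ) (t : ℝ) : Matrix.vecMul α (Mmat u t) 0 = α 0 * Real.exp (t * u 5) - α 3 * (u 1 * (Real.exp (t * u 5) * ph (u 6) t)) - α 4 * (u 2 * (t * Real.exp (t * u 5))) := by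
  simp only [Matrix.vecMul, dotProduct, Fin.sum_univ_seven, Me_0_0, Me_1_0, Me_2_0, Me_3_0, Me_4_0, Me_5_0, Me_6_0]
  ring

lemma vm_1 (α u : Fin 7 → ℝ) (t : ℝ) : Matrix.vecMul α (Mmat u t) 1 = α 1 * Real.exp (t * u 6) + α 3 * (u 0 * (Real.exp (t * u 6) * ph (u 5) t)) := by
  simp only [Matrix.vecMul, dotProduct, Fin.sum_univ_seven, Me_0_1, Me_1_1, Me_2_1, Me_3_1, Me_4_1, Me_5_1, Me_6_1]
  ring

lemma vm_2 (α u : Fin 7 → ℝ) (t : ℝ) : Matrix.vecMul α (Mmat u t) 2 = α 2 + α 4 * (u 0 * ph (u 5) t) := by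
  simp only [Matrix.vecMul, dotProduct, Fin.sum_univ_seven, Me_0_2, Me_1_2, Me_2_2, Me_3_2, Me_4_2, Me_5_2, Me_6_2]
  ring

lemma vm_3 (α u : Fin 7 → ℝ) (t : ℝ) : Matrix.vecMul α (Mmat u t) 3 = α 3 * Real.exp (t * (u 5 + u 6)) := by
  simp only [Matrix.vecMul, dotProduct, Fin.sum_univ_seven, Me_0_3, Me_1_3, Me_2_3, Me_3_3, Me_4_3, Me_5_3, Me_6_3]
  ring

lemma vm_4 (α u : Fin 7 → ℝ) (t : ℝ) : Matrix.vecMul α (Mmat u t) 4 = α 4 * Real.exp (t * u 5) := by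
  simp only [Matrix.vecMul, dotProduct, Fin.sum_univ_seven, Me_0_4, Me_1_4, Me_2_4, Me_3_4, Me_4_4, Me_5_4, Me_6_4]
  ring

lemma vm_5 (α u : Fin 7 → ℝ) (t : ℝ) : Matrix.vecMul α (Mmat u t) 5 = α 5 - α 0 * (u 0 * ph (u 5) t) + α 3 * (-u 3 * ph (u 5 + u 6) t + u 0 * u 1 * ch (u 5 + u 6) (u 5) t) + α 4 * (u 0 * u 2 * ch (u 5) (u 5) t - u 4 * ph (u 5) t) := by
  simp only [Matrix.vecMul, dotProduct, Fin.sum_univ_seven, Me_0_5, Me_1_5, Me_2_5, Me_3_5, Me_4_5, Me_5_5, Me_6_5]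
  ring

lemma vm_6 (α u : Fin 7 → ℝ) (t : ℝ) : Matrix.vecMul α (Mmat u t) 6 = α 6 - α 1 * (u 1 * ph (u 6) t) + α 3 * (-u 3 * ph (u 5 + u 6) t - u 0 * u 1 * ch (u 5 + u 6) (u 6) t) := by
  simp only [Matrix.vecMul, dotProduct, Fin.sum_univ_seven, Me_0_6, Me_1_6, Me_2_6, Me_3_6, Me_4_6, Me_5_6, Me_6_6]
  ring



/-- If `F ∈ (𝔊₄⁰⁰)*` has coordinates `(α₁,…,α₅,α,β)` with `α₄α₅ ≠ 0`, then
`Ω_F(𝔊₄⁰⁰) = {(x₁*,…,x₅*,x*,y*) : x₃* − x₂*x₅*/x₄* = (α₃α₄−α₂α₅)/α₄,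
α₄x₄* > 0, α₅x₅* > 0}`. -/
theorem omega_G400_quadric (α : Fin 7 → ℝ) (h45 : α 3 * α 4 ≠ 0) :
    OmegaG4 α = {g : Fin 7 → ℝ |
      g 2 - g 1 * g 4 / g 3 = (α 2 * α 3 - α 1 * α 4) / α 3 ∧
      α 3 * g 3 > 0 ∧ α 4 * g 4 > 0} := by
  have hα3 : α 3 ≠ 0 := fun h => h45 (by rw [h]; ring)
  have hα4 : α 4 ≠ 0 := fun h => h45 (by rw [h]; ring)
  ext g
  simp only [OmegaG4, Set.mem_setOf_eq]
  constructor
  · rintro ⟨u, rfl⟩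
    rw [exp_adG4]
    have hsplit : Real.exp (1 * (u 5 + u 6)) = Real.exp (1 * u 5) * Real.exp (1 * u 6) := by
      rw [← Real.exp_add]; ring_nf
    refine ⟨?_, ?_, ?_⟩
    · rw [vm_2, vm_1, vm_4, vm_3, hsplit]
      have h5 := Real.exp_ne_zero (1 * u 5)
      have h6 := Real.exp_ne_zero (1 * u 6)
      field_simp
      ring
    · rw [vm_3]
      have h : α 3 * (α 3 * Real.exp (1 * (u 5 + u 6)))
          = (α 3 * α 3) * Real.exp (1 * (u 5 + u 6)) := by ring
      rw [gt_iff_lt, h]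
      exact mul_pos (mul_self_pos.mpr hα3) (Real.exp_pos _)
    · rw [vm_4]
      have h : α 4 * (α 4 * Real.exp (1 * u 5)) = (α 4 * α 4) * Real.exp (1 * u 5) := by ring
      rw [gt_iff_lt, h]
      exact mul_pos (mul_self_pos.mpr hα4) (Real.exp_pos _)
  · rintro ⟨hq, h3, h4⟩
    have hg3 : g 3 ≠ 0 := by rintro h; rw [h, mul_zero] at h3; exact lt_irrefl 0 h3
    have hg4 : g 4 ≠ 0 := by rintro h; rw [h, mul_zero] at h4; exact lt_irrefl 0 h4
    set ea := g 4 / α 4 with hea_def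
    set eb := g 3 * α 4 / (α 3 * g 4) with heb_def
    have hea_pos : 0 < ea := by
      have h : ea = (α 4 * g 4) / (α 4)^2 := by rw [hea_def]; field_simp
      rw [h]; positivity
    have heb_pos : 0 < eb := by
      have h : eb = ((α 3 * g 3) * (α 4 * g 4)) / ((α 3)^2 * (g 4)^2) := by
        rw [heb_def]; field_simp
      rw [h]; positivity
    set a := Real.log ea with ha_def
    set b := Real.log eb with hb_def
    have hexpa : Real.exp a = ea := Real.exp_log hea_pos
    have hexpb : Real.exp b = eb := Real.exp_log heb_pos
    have hea : ea ≠ 0 := ne_of_gt hea_pos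
    have heb : eb ≠ 0 := ne_of_gt heb_pos
    have hP : (0:ℝ) < ph a 1 := ph_one_pos a
    have hPhi : (0:ℝ) < ph (a+b) 1 := ph_one_pos (a+b)
    have hPne : ph a 1 ≠ 0 := ne_of_gt hP
    have hPhine : ph (a+b) 1 ≠ 0 := ne_of_gt hPhi
    set u0 := (g 1 - α 1 * eb) / (α 3 * (eb * ph a 1)) with hu0
    set u2 := (α 0 * ea - g 0) / (α 4 * ea) with hu2
    set u3 := (α 6 - g 6) / (α 3 * ph (a+b) 1) with hu3
    set u4 := (α 5 - α 0 * u0 * ph a 1 - α 3 * u3 * ph (a+b) 1 + α 4 * u0 * u2 * ch a a 1 - g 5)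
        / (α 4 * ph a 1) with hu4
    refine ⟨![u0, 0, u2, u3, u4, a, b], ?_⟩
    rw [exp_adG4]
    funext j
    fin_cases j
    · show g 0 = Matrix.vecMul α (Mmat ![u0, 0, u2, u3, u4, a, b] 1) 0
      rw [vm_0]
      simp only [cv_0_0, cv_1_0, cv_1_1, cv_2_0, cv_2_1, cv_2_2, cv_3_0, cv_3_1, cv_3_2, cv_3_3, cv_4_0, cv_4_1, cv_4_2, cv_4_3, cv_4_4, cv_5_0, cv_5_1, cv_5_2, cv_5_3, cv_5_4, cv_5_5, cv_6_0, cv_6_1, cv_6_2, cv_6_3, cv_6_4, cv_6_5, cv_6_6, one_mul, zero_mul, mul_zero, sub_zero]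
      rw [hexpa, hu2]
      field_simp
      ring
    · show g 1 = Matrix.vecMul α (Mmat ![u0, 0, u2, u3, u4, a, b] 1) 1
      rw [vm_1]
      simp only [cv_0_0, cv_1_0, cv_1_1, cv_2_0, cv_2_1, cv_2_2, cv_3_0, cv_3_1, cv_3_2, cv_3_3, cv_4_0, cv_4_1, cv_4_2, cv_4_3, cv_4_4, cv_5_0, cv_5_1, cv_5_2, cv_5_3, cv_5_4, cv_5_5, cv_6_0, cv_6_1, cv_6_2, cv_6_3, cv_6_4, cv_6_5, cv_6_6, one_mul]
      rw [hexpb, hu0]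
      field_simp
      ring
    · show g 2 = Matrix.vecMul α (Mmat ![u0, 0, u2, u3, u4, a, b] 1) 2
      rw [vm_2]
      simp only [cv_0_0, cv_1_0, cv_1_1, cv_2_0, cv_2_1, cv_2_2, cv_3_0, cv_3_1, cv_3_2, cv_3_3, cv_4_0, cv_4_1, cv_4_2, cv_4_3, cv_4_4, cv_5_0, cv_5_1, cv_5_2, cv_5_3, cv_5_4, cv_5_5, cv_6_0, cv_6_1, cv_6_2, cv_6_3, cv_6_4, cv_6_5, cv_6_6, one_mul]
      rw [hu0, heb_def]
      have hq' : g 2 * (g 3 * α 3) = g 1 * g 4 * α 3 + (α 2 * α 3 - α 1 * α 4) * g 3 := by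
        field_simp at hq
        linarith
      field_simp
      linear_combination hq'
    · show g 3 = Matrix.vecMul α (Mmat ![u0, 0, u2, u3, u4, a, b] 1) 3
      rw [vm_3]
      simp only [cv_0_0, cv_1_0, cv_1_1, cv_2_0, cv_2_1, cv_2_2, cv_3_0, cv_3_1, cv_3_2, cv_3_3, cv_4_0, cv_4_1, cv_4_2, cv_4_3, cv_4_4, cv_5_0, cv_5_1, cv_5_2, cv_5_3, cv_5_4, cv_5_5, cv_6_0, cv_6_1, cv_6_2, cv_6_3, cv_6_4, cv_6_5, cv_6_6, one_mul]
      rw [Real.exp_add, hexpa, hexpb, hea_def, heb_def]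
      field_simp
    · show g 4 = Matrix.vecMul α (Mmat ![u0, 0, u2, u3, u4, a, b] 1) 4
      rw [vm_4]
      simp only [cv_0_0, cv_1_0, cv_1_1, cv_2_0, cv_2_1, cv_2_2, cv_3_0, cv_3_1, cv_3_2, cv_3_3, cv_4_0, cv_4_1, cv_4_2, cv_4_3, cv_4_4, cv_5_0, cv_5_1, cv_5_2, cv_5_3, cv_5_4, cv_5_5, cv_6_0, cv_6_1, cv_6_2, cv_6_3, cv_6_4, cv_6_5, cv_6_6, one_mul]
      rw [hexpa, hea_def]
      field_simp
    · show g 5 = Matrix.vecMul α (Mmat ![u0, 0, u2, u3, u4, a, b] 1) 5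
      rw [vm_5]
      simp only [cv_0_0, cv_1_0, cv_1_1, cv_2_0, cv_2_1, cv_2_2, cv_3_0, cv_3_1, cv_3_2, cv_3_3, cv_4_0, cv_4_1, cv_4_2, cv_4_3, cv_4_4, cv_5_0, cv_5_1, cv_5_2, cv_5_3, cv_5_4, cv_5_5, cv_6_0, cv_6_1, cv_6_2, cv_6_3, cv_6_4, cv_6_5, cv_6_6, one_mul]
      rw [hu4]
      field_simp
      ring
    · show g 6 = Matrix.vecMul α (Mmat ![u0, 0, u2, u3, u4, a, b] 1) 6
      rw [vm_6]
      simp only [cv_0_0, cv_1_0, cv_1_1, cv_2_0, cv_2_1, cv_2_2, cv_3_0, cv_3_1, cv_3_2, cv_3_3, cv_4_0, cv_4_1, cv_4_2, cv_4_3, cv_4_4, cv_5_0, cv_5_1, cv_5_2, cv_5_3, cv_5_4, cv_5_5, cv_6_0, cv_6_1, cv_6_2, cv_6_3, cv_6_4, cv_6_5, cv_6_6, one_mul]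
      rw [hu3]
      field_simp
      ring


end
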